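/- Let ψ_n and ψ'_n be distributions on the finite state space of a Markov chain evolving under the same transition kernel r, i.e., p_{n+1}(y) = ∑_x p_n(x) r(y|x) and s_{n+1}(y) = ∑_x s_n(x) r(y|x), with all probabilities positive, and q ≠ 1. Then D_q(ψ_n || ψ'_n) ≥ D_q(ψ_{n+1} || ψ'_{n+1}) + (1-q)·∑_{x_n, x_{n+1}} p(x_{n+1}, x_n)·ln_q(p(x_{n+1})/s(x_{n+1}))·ln_q(p(x_n|x_{n+1})/s(x_n|x_{n+1})), for q ≤ 2. -/

import Mathlib

noncomputable def lnq (q t : ℝ) : ℝ := (t ^ (1 - q) - 1) / (1 - q)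

lemma lnq_mul (q : ℝ) (hq : q ≠ 1) {a b : ℝ} (ha : 0 < a) (hb : 0 < b) :
    lnq q (a * b) = lnq q a + lnq q b + (1 - q) * lnq q a * lnq q b := by
  have h1 : (1:ℝ) - q ≠ 0 := sub_ne_zero.mpr (Ne.symm hq)
  unfold lnq
  rw [Real.mul_rpow ha.le hb.le]
  field_simp
  ring

lemma tsallis_nonneg {α : Type*} [Fintype α] (q : ℝ) (hq2 : q ≤ 2) (hq1 : q ≠ 1)
    (p s : α → ℝ) (hp0 : ∀ x, 0 < p x) (hp1 : ∑ x, p x = 1)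
    (hs0 : ∀ x, 0 < s x) (hs1 : ∑ x, s x = 1) :
    0 ≤ ∑ x, p x * lnq q (p x / s x) := by
  have h1q : (1:ℝ) - q ≠ 0 := sub_ne_zero.mpr (Ne.symm hq1)
  set t : α → ℝ := fun x => p x / s x with ht
  have ht0 : ∀ x, 0 < t x := fun x => div_pos (hp0 x) (hs0 x)
  have hst : ∑ x, s x * t x = 1 := by
    rw [← hp1]; congr 1; ext x
    simp only [ht]; field_simp [(hs0 x).ne']
  have key : ∀ x, p x * lnq q (p x / s x)
      = (s x * t x ^ (2 - q) - p x) / (1 - q) := by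
    intro x
    have h2 : (t x) ^ (2 - q) = t x * (t x) ^ (1 - q) := by
      rw [show (2:ℝ) - q = 1 + (1 - q) by ring, Real.rpow_add (ht0 x), Real.rpow_one]
    have hpx : p x = s x * t x := by simp only [ht]; field_simp [(hs0 x).ne']
    show p x * lnq q (t x) = _
    unfold lnq
    rw [h2, hpx]
    field_simp
  rw [Finset.sum_congr rfl (fun x _ => key x), ← Finset.sum_div,
    Finset.sum_sub_distrib, hp1]
  rcases lt_or_gt_of_ne hq1 with h | h
  · -- q < 1, convex case, 1 ≤ 2 - q
    apply div_nonneg _ (by linarith)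
    have := Real.rpow_arith_mean_le_arith_mean_rpow Finset.univ s t
      (fun x _ => (hs0 x).le) hs1 (fun x _ => (ht0 x).le) (p := 2 - q) (by linarith)
    rw [hst, Real.one_rpow] at this
    linarith
  · -- 1 < q ≤ 2
    rw [div_nonneg_iff]
    refine Or.inr ⟨?_, by linarith⟩
    rcases eq_or_lt_of_le hq2 with h2 | h2
    · have : ∀ x, s x * t x ^ (2 - q) = s x := by
        intro x; rw [← h2]; simp [Real.rpow_zero]
      rw [Finset.sum_congr rfl (fun x _ => this x), hs1]; simp
    · have he : 0 < 2 - q := by linarith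
      have h1e : 1 ≤ 1 / (2 - q) := by
        rw [le_div_iff₀ he]; linarith
      have := Real.arith_mean_le_rpow_mean Finset.univ s (fun x => t x ^ (2 - q))
        (fun x _ => (hs0 x).le) hs1 (fun x _ => Real.rpow_nonneg (ht0 x).le _) h1e
      have heq : ∀ x, (t x ^ (2 - q)) ^ (1 / (2 - q)) = t x := by
        intro x
        rw [← Real.rpow_mul (ht0 x).le, mul_one_div, div_self he.ne', Real.rpow_one]
      simp only [heq] at this
      rw [hst, one_div_one_div, Real.one_rpow] at this
      linarith

theorem markov_relative_q_entropy_ineq {α : Type*} [Fintype α]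
    (q : ℝ) (hq2 : q ≤ 2) (hq1 : q ≠ 1)
    (p s : α → ℝ) (r : α → α → ℝ)
    (hp0 : ∀ x, 0 < p x) (hp1 : ∑ x, p x = 1)
    (hs0 : ∀ x, 0 < s x) (hs1 : ∑ x, s x = 1)
    (hr0 : ∀ x y, 0 < r x y) (hr1 : ∀ x, ∑ y, r x y = 1) :
    (∑ x, p x * lnq q (p x / s x)) ≥
      (∑ y, (∑ x, p x * r x y) * lnq q ((∑ x, p x * r x y) / (∑ x, s x * r x y))) +
      (1 - q) * ∑ x, ∑ y, p x * r x y *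
        lnq q ((∑ x', p x' * r x' y) / (∑ x', s x' * r x' y)) *
        lnq q ((p x * r x y / ∑ x', p x' * r x' y) /
               (s x * r x y / ∑ x', s x' * r x' y)) := by
  have hne : Nonempty α := by
    by_contra h
    rw [not_nonempty_iff] at h
    rw [Finset.sum_eq_zero (fun x _ => (h.false x).elim)] at hp1
    norm_num at hp1
  set P : α → ℝ := fun y => ∑ x, p x * r x y with hPdef
  set S : α → ℝ := fun y => ∑ x, s x * r x y with hSdef
  have hP0 : ∀ y, 0 < P y := fun y =>
    Finset.sum_pos (fun x _ => mul_pos (hp0 x) (hr0 x y)) Finset.univ_nonempty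
  have hS0 : ∀ y, 0 < S y := fun y =>
    Finset.sum_pos (fun x _ => mul_pos (hs0 x) (hr0 x y)) Finset.univ_nonempty
  -- the LHS as a double sum
  have hL : ∑ x, p x * lnq q (p x / s x)
      = ∑ x, ∑ y, p x * r x y * lnq q (p x / s x) := by
    refine Finset.sum_congr rfl fun x _ => ?_
    have h : ∑ y, p x * r x y * lnq q (p x / s x)
        = (∑ y, r x y) * (p x * lnq q (p x / s x)) := by
      rw [Finset.sum_mul]; exact Finset.sum_congr rfl fun y _ => by ring
    rw [h, hr1 x, one_mul]
  -- pointwise expansion via the q-chain rule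
  have expand : ∀ x y, p x * r x y * lnq q (p x / s x)
      = p x * r x y * lnq q (P y / S y)
      + p x * r x y * lnq q ((p x * r x y / P y) / (s x * r x y / S y))
      + (1 - q) * (p x * r x y * lnq q (P y / S y) *
          lnq q ((p x * r x y / P y) / (s x * r x y / S y))) := by
    intro x y
    have hA : 0 < P y / S y := div_pos (hP0 y) (hS0 y)
    have hB : 0 < (p x * r x y / P y) / (s x * r x y / S y) :=
      div_pos (div_pos (mul_pos (hp0 x) (hr0 x y)) (hP0 y))
        (div_pos (mul_pos (hs0 x) (hr0 x y)) (hS0 y))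
    have hAB : p x / s x
        = (P y / S y) * ((p x * r x y / P y) / (s x * r x y / S y)) := by
      field_simp [(hs0 x).ne', (hr0 x y).ne', (hP0 y).ne', (hS0 y).ne', (hS0 y).ne.symm]
    rw [hAB, lnq_mul q hq1 hA hB]
    ring
  rw [hL, Finset.sum_congr rfl fun x _ => Finset.sum_congr rfl fun y _ => expand x y]
  simp only [Finset.sum_add_distrib]
  -- term 1 equals the first RHS summand
  have hT1 : ∑ x, ∑ y, p x * r x y * lnq q (P y / S y)
      = ∑ y, P y * lnq q (P y / S y) := by
    rw [Finset.sum_comm]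
    exact Finset.sum_congr rfl fun y _ => by rw [hPdef, Finset.sum_mul]
  -- term 2 is nonnegative
  have hT2 : 0 ≤ ∑ x, ∑ y, p x * r x y *
      lnq q ((p x * r x y / P y) / (s x * r x y / S y)) := by
    rw [Finset.sum_comm]
    refine Finset.sum_nonneg fun y _ => ?_
    have hp1' : ∑ x, p x * r x y / P y = 1 := by
      rw [← Finset.sum_div, div_self (hP0 y).ne']
    have hs1' : ∑ x, s x * r x y / S y = 1 := by
      rw [← Finset.sum_div, div_self (hS0 y).ne']
    have h := tsallis_nonneg q hq2 hq1 (fun x => p x * r x y / P y)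
      (fun x => s x * r x y / S y)
      (fun x => div_pos (mul_pos (hp0 x) (hr0 x y)) (hP0 y)) hp1'
      (fun x => div_pos (mul_pos (hs0 x) (hr0 x y)) (hS0 y)) hs1'
    have hscale : ∑ x, p x * r x y * lnq q ((p x * r x y / P y) / (s x * r x y / S y))
        = P y * ∑ x, (p x * r x y / P y) *
            lnq q ((p x * r x y / P y) / (s x * r x y / S y)) := by
      rw [Finset.mul_sum]
      refine Finset.sum_congr rfl fun x _ => ?_
      generalize lnq q ((p x * r x y / P y) / (s x * r x y / S y)) = L
      field_simp [(hP0 y).ne']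
    rw [hscale]
    exact mul_nonneg (hP0 y).le h
  -- term 3 equals the cross term
  have hT3 : ∑ x, ∑ y, (1 - q) * (p x * r x y * lnq q (P y / S y) *
        lnq q ((p x * r x y / P y) / (s x * r x y / S y)))
      = (1 - q) * ∑ x, ∑ y, p x * r x y * lnq q (P y / S y) *
        lnq q ((p x * r x y / P y) / (s x * r x y / S y)) := by
    simp only [Finset.mul_sum]
  rw [hT1, hT3]
  linarith
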